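/- Let d be a positive odd integer, k = ⌊d/4⌋, and c_j = (∏_{1≤ℓ≤k} (d - 2j - 2ℓ)) / (∏_{1≤ℓ≤k, ℓ≠j} (2ℓ - 2j)). Then ∑_{j=1}^{k} c_j/(2j) + 1 = ∏_{ℓ=1}^{k} (d - 2ℓ)/(2ℓ). -/
import Mathlib

open Finset Polynomial


lemma prod_neg_aux {F : Type*} [CommRing F] (s : Finset ℕ) (g : ℕ → F) :
    ∏ i ∈ s, (-g i) = (-1) ^ #s * ∏ i ∈ s, g i := by
  calc ∏ i ∈ s, (-g i) = ∏ i ∈ s, ((-1) * g i) := by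
        refine Finset.prod_congr rfl fun i _ => by ring
    _ = (-1) ^ #s * ∏ i ∈ s, g i := by rw [Finset.prod_mul_distrib, Finset.prod_const]

lemma coeff_basis_aux {F : Type*} [Field F] {ι : Type*} [DecidableEq ι] (s : Finset ι)
    (v : ι → F) (i : ι) :
    (Lagrange.basis s v i).coeff #(s.erase i) = ∏ j ∈ s.erase i, (v i - v j)⁻¹ := by
  have h1 : Lagrange.basis s v i
      = C (∏ j ∈ s.erase i, (v i - v j)⁻¹) * Lagrange.nodal (s.erase i) v := by
    rw [Lagrange.basis, Lagrange.nodal_eq, map_prod, ← Finset.prod_mul_distrib]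
    rfl
  have h2 : (Lagrange.nodal (s.erase i) v).coeff #(s.erase i) = 1 := by
    have h3 := Lagrange.nodal_monic (s := s.erase i) (v := v)
    have h4 := Lagrange.natDegree_nodal (s := s.erase i) (v := v)
    simpa [Polynomial.Monic, Polynomial.leadingCoeff, h4] using h3
  rw [h1, coeff_C_mul, h2, mul_one]

lemma coeff_eq_sum_eval {F : Type*} [Field F] {ι : Type*} [DecidableEq ι] {s : Finset ι}
    {v : ι → F} (hvs : Set.InjOn v s) {f : F[X]} (hf : f.degree < #s) :
    f.coeff (#s - 1) = ∑ i ∈ s, f.eval (v i) * ∏ j ∈ s.erase i, (v i - v j)⁻¹ := by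
  conv_lhs => rw [Lagrange.eq_interpolate hvs hf]
  rw [Lagrange.interpolate_apply, Polynomial.finset_sum_coeff]
  refine Finset.sum_congr rfl fun i hi => ?_
  rw [Polynomial.coeff_C_mul, ← Finset.card_erase_of_mem hi, coeff_basis_aux]


/-- For `d` a positive odd integer, `k = ⌊d/4⌋`, and the coefficients
`c j = (∏_{1≤ℓ≤k} (d - 2j - 2ℓ)) / (∏_{1≤ℓ≤k, ℓ≠j} (2ℓ - 2j))`, one has
`∑_{j=1}^{k} c j / (2j) + 1 = ∏_{ℓ=1}^{k} (d - 2ℓ)/(2ℓ)`. -/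
theorem ci_identity_two (d : ℕ) (hd : Odd d) (hd0 : 0 < d)
    (c : ℕ → ℝ)
    (hc : ∀ j, c j =
      (∏ ℓ ∈ Finset.Icc 1 (d / 4), ((d : ℝ) - 2 * (j : ℝ) - 2 * (ℓ : ℝ))) /
        ∏ ℓ ∈ (Finset.Icc 1 (d / 4)).erase j, (2 * (ℓ : ℝ) - 2 * (j : ℝ))) :
    ∑ j ∈ Finset.Icc 1 (d / 4), c j / (2 * (j : ℝ)) + 1 =
      ∏ ℓ ∈ Finset.Icc 1 (d / 4), ((d : ℝ) - 2 * (ℓ : ℝ)) / (2 * (ℓ : ℝ)) := by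
  set k := d / 4 with hk
  rcases Nat.eq_zero_or_pos k with hk0 | hk1
  · simp [hk0]
  set v : ℕ → ℝ := fun j => 2 * (j : ℝ) with hv
  have hvs : Set.InjOn v (Finset.Icc 0 k) := by
    intro a _ b _ h
    have : (a : ℝ) = b := by simpa [hv] using h
    exact_mod_cast this
  set f : Polynomial ℝ := Lagrange.nodal (Finset.Icc 1 k) (fun ℓ => (d : ℝ) - 2 * ℓ) with hf
  have hcard0 : #(Finset.Icc 0 k) = k + 1 := by simp
  have hcard1 : #(Finset.Icc 1 k) = k := by simp
  have hdeg : f.degree < #(Finset.Icc 0 k) := by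
    rw [hcard0, hf, Lagrange.degree_nodal, hcard1]
    exact_mod_cast Nat.lt_succ_self k
  have key := coeff_eq_sum_eval hvs hdeg
  have hcoeff : f.coeff (#(Finset.Icc 0 k) - 1) = 1 := by
    have hm := Lagrange.nodal_monic (s := Finset.Icc 1 k) (v := fun ℓ => (d : ℝ) - 2 * ℓ)
    have hn := Lagrange.natDegree_nodal (s := Finset.Icc 1 k)
      (v := fun ℓ => (d : ℝ) - 2 * ℓ) (R := ℝ)
    rw [hcard0]
    simpa [Polynomial.Monic, Polynomial.leadingCoeff, hn, hcard1] using hm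
  -- split off i = 0
  have hsplit : Finset.Icc 0 k = insert 0 (Finset.Icc 1 k) := by
    ext a; simp; omega
  have h0notin : (0 : ℕ) ∉ Finset.Icc 1 k := by simp
  have herase0 : (Finset.Icc 0 k).erase 0 = Finset.Icc 1 k := by
    ext a; simp; omega
  rw [hcoeff, hsplit, Finset.sum_insert h0notin, ← hsplit, herase0] at key
  -- the i = 0 term
  have hT0 : f.eval (v 0) * ∏ j ∈ Finset.Icc 1 k, (v 0 - v j)⁻¹ =
      ∏ ℓ ∈ Finset.Icc 1 k, ((d : ℝ) - 2 * ℓ) / (2 * ℓ) := by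
    rw [hf, Lagrange.eval_nodal, ← Finset.prod_mul_distrib]
    refine Finset.prod_congr rfl fun ℓ _ => ?_
    simp only [hv, Nat.cast_zero, mul_zero, zero_sub, inv_neg]
    ring
  rw [hT0] at key
  -- the i = j ≥ 1 terms
  have hterm : ∀ j ∈ Finset.Icc 1 k,
      f.eval (v j) * ∏ m ∈ (Finset.Icc 0 k).erase j, (v j - v m)⁻¹ =
      -(c j / (2 * (j : ℝ))) := by
    intro j hj
    have hj1 : 1 ≤ j := (Finset.mem_Icc.mp hj).1
    have hjk : j ≤ k := (Finset.mem_Icc.mp hj).2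
    have hjne : (j : ℝ) ≠ 0 := by positivity
    set E : Finset ℕ := (Finset.Icc 1 k).erase j with hE
    have hcardE : #E = k - 1 := by rw [hE, Finset.card_erase_of_mem hj, hcard1]
    have heraseJ : (Finset.Icc 0 k).erase j = insert 0 E := by
      ext a; simp [hE]; omega
    have h0E : (0 : ℕ) ∉ E := by simp [hE]
    set N : ℝ := ∏ ℓ ∈ Finset.Icc 1 k, ((d : ℝ) - 2 * (j : ℝ) - 2 * (ℓ : ℝ)) with hN
    set D : ℝ := ∏ ℓ ∈ E, (2 * (ℓ : ℝ) - 2 * (j : ℝ)) with hD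
    have hDne : D ≠ 0 := by
      rw [hD]
      refine Finset.prod_ne_zero_iff.mpr fun ℓ hℓ => ?_
      have hℓj : ℓ ≠ j := (Finset.mem_erase.mp hℓ).1
      have : (ℓ : ℝ) ≠ j := by exact_mod_cast hℓj
      intro hcon; apply this; linarith [sub_eq_zero.mp hcon]
    have heval : f.eval (v j) = (-1) ^ k * N := by
      rw [hf, Lagrange.eval_nodal, hN]
      calc ∏ ℓ ∈ Finset.Icc 1 k, (v j - ((d : ℝ) - 2 * ℓ))
          = ∏ ℓ ∈ Finset.Icc 1 k, -((d : ℝ) - 2 * (j : ℝ) - 2 * (ℓ : ℝ)) :=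
            Finset.prod_congr rfl fun ℓ _ => by simp only [hv]; ring
        _ = (-1) ^ #(Finset.Icc 1 k) *
              ∏ ℓ ∈ Finset.Icc 1 k, ((d : ℝ) - 2 * (j : ℝ) - 2 * (ℓ : ℝ)) :=
            prod_neg_aux _ _
        _ = (-1) ^ k * ∏ ℓ ∈ Finset.Icc 1 k, ((d : ℝ) - 2 * (j : ℝ) - 2 * (ℓ : ℝ)) := by
            rw [hcard1]
    have hprodE : ∏ m ∈ E, (v j - v m)⁻¹ = ((-1) ^ (k - 1) * D)⁻¹ := by
      rw [Finset.prod_inv_distrib]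
      congr 1
      calc ∏ m ∈ E, (v j - v m)
          = ∏ m ∈ E, -(2 * (m : ℝ) - 2 * (j : ℝ)) :=
            Finset.prod_congr rfl fun m _ => by simp only [hv]; ring
        _ = (-1) ^ #E * ∏ m ∈ E, (2 * (m : ℝ) - 2 * (j : ℝ)) := prod_neg_aux _ _
        _ = (-1) ^ (k - 1) * D := by rw [hcardE, hD]
    have hsign : ((-1 : ℝ)) ^ k * (-1) ^ (k - 1) = -1 := by
      rw [← pow_add]
      exact Odd.neg_one_pow ⟨k - 1, by omega⟩
    have hinv : (((-1 : ℝ)) ^ (k - 1) * D)⁻¹ = (-1) ^ (k - 1) * D⁻¹ := by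
      rw [mul_inv]
      congr 1
      rw [← inv_pow]
      norm_num
    rw [heraseJ, Finset.prod_insert h0E, heval, hprodE, hc j, ← hN, ← hE, ← hD]
    have hv0 : v j - v 0 = 2 * (j : ℝ) := by simp [hv]
    rw [hv0, hinv]
    calc ((-1 : ℝ)) ^ k * N * ((2 * (j : ℝ))⁻¹ * ((-1) ^ (k - 1) * D⁻¹))
        = ((-1 : ℝ)) ^ k * (-1) ^ (k - 1) * (N * D⁻¹ * (2 * (j : ℝ))⁻¹) := by ring
      _ = -(N / D / (2 * (j : ℝ))) := by rw [hsign]; ring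
  rw [Finset.sum_congr rfl hterm, Finset.sum_neg_distrib] at key
  linarith [key]
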